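/- Let X be a locally compact, σ-compact metrizable topological space and let f : X → X be a homeomorphism whose induced ℤ-action n·x = fⁿ(x) is metric-independent expansive (MIE). Then for every integer n ≠ 0, the ℤ-action generated by fⁿ (i.e. m·x = f^{nm}(x)) is metric-independent expansive. -/

import Mathlib

/-- An action `φ` is expansive with respect to a distance function `d`. -/
def ExpansiveWith {G X : Type*} (φ : G → X → X) (d : X → X → ℝ) : Prop :=
  ∃ c > 0, ∀ x y : X, x ≠ y → ∃ g : G, c < d (φ g x) (φ g y)

/-- Metric-independent expansiveness: expansive with respect to every metric
compatible with the topology. -/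
def MIE {G X : Type*} [tX : TopologicalSpace X] (φ : G → X → X) : Prop :=
  ∀ m : MetricSpace X, m.toUniformSpace.toTopologicalSpace = tX →
    ExpansiveWith φ (fun x y => @dist X m.toDist x y)

open Set Topology Metric Filter Function

/-- Shrinking finitely many positive tolerances to a common one. -/
lemma exists_pos_forall_of_anti {R : ℕ → ℝ → Prop}
    (hmono : ∀ k δ δ', 0 < δ' → δ' ≤ δ → R k δ → R k δ') :
    ∀ K : ℕ, (∀ k < K, ∃ δ > 0, R k δ) → ∃ δ > 0, ∀ k < K, R k δ := by
  intro K
  induction K with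
  | zero => exact fun _ => ⟨1, one_pos, fun k hk => absurd hk (Nat.not_lt_zero k)⟩
  | succ K ih =>
    intro h
    obtain ⟨δ₁, hδ₁, h₁⟩ := ih fun k hk => h k (hk.trans (Nat.lt_succ_self K))
    obtain ⟨δ₂, hδ₂, h₂⟩ := h K (Nat.lt_succ_self K)
    refine ⟨min δ₁ δ₂, lt_min hδ₁ hδ₂, fun k hk => ?_⟩
    rcases Nat.lt_succ_iff_lt_or_eq.mp hk with hk | rfl
    · exact hmono k δ₁ _ (lt_min hδ₁ hδ₂) (min_le_left _ _) (h₁ k hk)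
    · exact hmono k δ₂ _ (lt_min hδ₁ hδ₂) (min_le_right _ _) h₂

/-- Realizing integer powers of the permutation underlying a homeomorphism as
homeomorphisms. -/
lemma exists_homeomorph_zpow {X : Type*} [TopologicalSpace X] (f : X ≃ₜ X) (j : ℤ) :
    ∃ g : X ≃ₜ X, ⇑g = ⇑(f.toEquiv ^ j) := by
  have hnat : ∀ jn : ℕ, ∃ g : X ≃ₜ X, ⇑g = ⇑(f.toEquiv ^ jn) := by
    intro jn
    induction jn with
    | zero => exact ⟨Homeomorph.refl X, by simp⟩
    | succ jn ih =>
      obtain ⟨g, hg⟩ := ih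
      refine ⟨f.trans g, funext fun x => ?_⟩
      have : (f.trans g) x = g (f x) := rfl
      rw [this, hg, pow_succ, Equiv.Perm.mul_apply]
      rfl
  cases j with
  | ofNat jn =>
    obtain ⟨g, hg⟩ := hnat jn
    exact ⟨g, by rw [hg, Int.ofNat_eq_coe, zpow_natCast]⟩
  | negSucc jn =>
    obtain ⟨g, hg⟩ := hnat (jn + 1)
    refine ⟨g.symm, funext fun x => ?_⟩
    apply (f.toEquiv ^ (jn + 1 : ℕ)).injective
    have h1 : (f.toEquiv ^ (jn + 1 : ℕ)) (g.symm x) = g (g.symm x) := by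
      rw [← hg]
    rw [h1, Homeomorph.apply_symm_apply, zpow_negSucc, ← Equiv.Perm.mul_apply, mul_inv_cancel, Equiv.Perm.one_apply]

/-- A countable family of `[0,1]`-valued compactly supported continuous bump functions
such that every point has, inside every open neighborhood, a bump equal to `1` at the
point with support inside the neighborhood. -/
lemma exists_bump_family (X : Type*) [TopologicalSpace X]
    [TopologicalSpace.MetrizableSpace X] [LocallyCompactSpace X] [SigmaCompactSpace X] :
    ∃ ψ : ℕ → C(X, ℝ), (∀ k, HasCompactSupport (ψ k)) ∧
      (∀ k x, ψ k x ∈ Set.Icc (0:ℝ) 1) ∧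
      (∀ (x : X) (O : Set X), IsOpen O → x ∈ O → ∃ k, ψ k x = 1 ∧ tsupport (ψ k) ⊆ O) := by
  rcases isEmpty_or_nonempty X with hX | hX
  · refine ⟨fun _ => 0, fun k => ?_, fun k x => (IsEmpty.false x).elim,
      fun x => (IsEmpty.false x).elim⟩
    have : tsupport (⇑(0 : C(X, ℝ))) = ∅ := Set.eq_empty_of_isEmpty _
    rw [HasCompactSupport, this]
    exact isCompact_empty
  letI : MetricSpace X := TopologicalSpace.metrizableSpaceMetric X
  obtain ⟨D, hDc, hDd⟩ := TopologicalSpace.exists_countable_dense X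
  -- the bump associated to a center and two radii
  set bump : X × ℚ × ℚ → C(X, ℝ) := fun p =>
    ⟨fun y => max 0 (min 1 (((p.2.2 : ℝ) - dist y p.1) / ((p.2.2 : ℝ) - (p.2.1 : ℝ)))),
      continuous_const.max (continuous_const.min
        ((continuous_const.sub (continuous_id.dist continuous_const)).div_const _))⟩ with hbump
  have hbump_mem : ∀ p y, bump p y ∈ Set.Icc (0:ℝ) 1 := by
    intro p y
    exact ⟨le_max_left _ _, max_le (by norm_num) (min_le_left _ _)⟩
  have hbump_one : ∀ p y, (p.2.1 : ℝ) < (p.2.2 : ℝ) → dist y p.1 ≤ (p.2.1 : ℝ) →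
      bump p y = 1 := by
    intro p y hqq hy
    have h1 : (1 : ℝ) ≤ ((p.2.2 : ℝ) - dist y p.1) / ((p.2.2 : ℝ) - (p.2.1 : ℝ)) := by
      rw [le_div_iff₀ (by linarith)]
      linarith
    simp only [hbump, ContinuousMap.coe_mk]
    rw [min_eq_left h1, max_eq_right (by norm_num : (0:ℝ) ≤ 1)]
  have hbump_supp : ∀ p, (p.2.1 : ℝ) < (p.2.2 : ℝ) →
      tsupport (bump p) ⊆ closedBall p.1 (p.2.2 : ℝ) := by
    intro p hqq
    apply closure_minimal _ isClosed_closedBall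
    intro y hy
    by_contra hout
    apply hy
    have hd : (p.2.2 : ℝ) ≤ dist y p.1 := by
      simp only [mem_closedBall] at hout; linarith
    have h0 : ((p.2.2 : ℝ) - dist y p.1) / ((p.2.2 : ℝ) - (p.2.1 : ℝ)) ≤ 0 :=
      div_nonpos_of_nonpos_of_nonneg (by linarith) (by linarith)
    simp only [hbump, ContinuousMap.coe_mk]
    rw [min_eq_right (le_trans h0 (by norm_num)), max_eq_left h0]
  -- the admissible set of parameters
  set S : Set (X × ℚ × ℚ) := {p | p.1 ∈ D ∧ (p.2.1 : ℝ) < (p.2.2 : ℝ) ∧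
      IsCompact (closedBall p.1 (p.2.2 : ℝ))} with hS
  have hSc : S.Countable := by
    have : S ⊆ D ×ˢ (Set.univ : Set (ℚ × ℚ)) := fun p hp => ⟨hp.1, trivial⟩
    exact Set.Countable.mono this (hDc.prod Set.countable_univ)
  -- key construction
  have key : ∀ (x : X) (O : Set X), IsOpen O → x ∈ O → ∃ p ∈ S,
      dist x p.1 ≤ (p.2.1 : ℝ) ∧ closedBall p.1 (p.2.2 : ℝ) ⊆ O := by
    intro x O hO hx
    obtain ⟨K, hK𝓝, hKO, hKc⟩ := local_compact_nhds (hO.mem_nhds hx)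
    obtain ⟨r, hr, hrK⟩ := (Metric.nhds_basis_closedBall.mem_iff).mp hK𝓝
    obtain ⟨z, hzD, hz⟩ := hDd.exists_dist_lt x (by positivity : (0:ℝ) < r / 8)
    obtain ⟨q, hq1, hq2⟩ := exists_rat_btwn (by linarith : r / 8 < r / 4)
    obtain ⟨q', hq'1, hq'2⟩ := exists_rat_btwn (by linarith : r / 4 < r / 2)
    have hball : closedBall z (q' : ℝ) ⊆ closedBall x r := by
      intro y hy
      simp only [mem_closedBall] at hy ⊢
      have : dist y x ≤ dist y z + dist z x := dist_triangle y z x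
      rw [dist_comm z x] at this
      linarith
    refine ⟨(z, q, q'), ⟨hzD, by linarith, ?_⟩, ?_, ?_⟩
    · exact hKc.of_isClosed_subset isClosed_closedBall (hball.trans hrK)
    · simp only []
      rw [dist_comm] at hz ⊢
      linarith
    · exact hball.trans (hrK.trans hKO)
  -- enumerate S
  have hSne : S.Nonempty := by
    obtain ⟨x⟩ := hX
    obtain ⟨p, hp, -, -⟩ := key x Set.univ isOpen_univ trivial
    exact ⟨p, hp⟩
  haveI : Countable ↥S := hSc.to_subtype
  haveI : Nonempty ↥S := hSne.to_subtype
  obtain ⟨e, he⟩ := exists_surjective_nat ↥S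
  refine ⟨fun k => bump (e k).1, fun k => ?_, fun k x => hbump_mem _ x, ?_⟩
  · -- compact support
    have hlt := (e k).2.2.1
    have hKc := (e k).2.2.2
    exact hKc.of_isClosed_subset (isClosed_tsupport _) (hbump_supp _ hlt)
  · intro x O hO hx
    obtain ⟨p, hpS, hpd, hpO⟩ := key x O hO hx
    obtain ⟨k, hk⟩ := he ⟨p, hpS⟩
    have hk' : ((e k) : X × ℚ × ℚ) = p := by rw [hk]
    refine ⟨k, ?_, ?_⟩
    · show bump ((e k) : X × ℚ × ℚ) x = 1
      rw [hk']
      exact hbump_one p x hpS.2.1 hpd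
    · show tsupport ⇑(bump ((e k) : X × ℚ × ℚ)) ⊆ O
      rw [hk']
      exact (hbump_supp p hpS.2.1).trans hpO

/-- If `f` is a homeomorphism of a locally compact, σ-compact metrizable space `X`
whose induced `ℤ`-action `k ⬝ x = f^k x` is metric-independent expansive, then for
every `n ≠ 0` the `ℤ`-action generated by `f^n` (i.e. `m ⬝ x = f^(n*m) x`) is
metric-independent expansive. -/
theorem mie_power {X : Type*} [TopologicalSpace X] [TopologicalSpace.MetrizableSpace X]
    [LocallyCompactSpace X] [SigmaCompactSpace X] (f : X ≃ₜ X)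
    (hmie : MIE (fun (k : ℤ) (x : X) => (f.toEquiv ^ k) x))
    (n : ℤ) (hn : n ≠ 0) :
    MIE (fun (m : ℤ) (x : X) => (f.toEquiv ^ (n * m)) x) := by
  intro m heq
  obtain ⟨ψ, hcs, h01, hbump⟩ := exists_bump_family X
  -- the embedding into bounded sequences
  have hmem : ∀ (k : ℕ) (x : X), (2:ℝ)⁻¹ ^ k * ψ k x ∈ Set.Icc (0:ℝ) 1 := by
    intro k x
    have h2 : (0:ℝ) ≤ (2:ℝ)⁻¹ ^ k := by positivity
    have h2' : (2:ℝ)⁻¹ ^ k ≤ 1 := pow_le_one₀ (by norm_num) (by norm_num)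
    exact ⟨mul_nonneg h2 (h01 k x).1,
      mul_le_one₀ h2' (h01 k x).1 (h01 k x).2⟩
  set Φ : X → BoundedContinuousFunction ℕ ℝ := fun x =>
    BoundedContinuousFunction.mkOfBound
      ⟨fun k => (2:ℝ)⁻¹ ^ k * ψ k x, continuous_of_discreteTopology⟩ 2
      (by
        intro a b
        have ha := hmem a x; have hb := hmem b x
        simp only [Set.mem_Icc] at ha hb
        rw [Real.dist_eq, abs_sub_le_iff]
        simp only [ContinuousMap.coe_mk]
        constructor <;> linarith) with hΦ
  have hΦapp : ∀ (x : X) (k : ℕ), Φ x k = (2:ℝ)⁻¹ ^ k * ψ k x := fun x k => rfl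
  have hcoord : ∀ (x y : X) (k : ℕ),
      dist (Φ x k) (Φ y k) = (2:ℝ)⁻¹ ^ k * dist (ψ k x) (ψ k y) := by
    intro x y k
    rw [hΦapp, hΦapp, Real.dist_eq, Real.dist_eq, ← mul_sub, abs_mul,
      abs_of_nonneg (by positivity : (0:ℝ) ≤ (2:ℝ)⁻¹ ^ k)]
  have hψd1 : ∀ (k : ℕ) (x y : X), dist (ψ k x) (ψ k y) ≤ 1 := by
    intro k x y
    have ha := h01 k x; have hb := h01 k y
    simp only [Set.mem_Icc] at ha hb
    rw [Real.dist_eq, abs_sub_le_iff]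
    constructor <;> linarith
  have h2k : ∀ k : ℕ, (0:ℝ) < (2:ℝ)⁻¹ ^ k := fun k => by positivity
  have h2k1 : ∀ k : ℕ, ((2:ℝ)⁻¹) ^ k ≤ 1 := fun k => pow_le_one₀ (by norm_num) (by norm_num)
  -- continuity of Φ
  have hΦcont : Continuous Φ := by
    rw [continuous_iff_continuousAt]
    intro x
    rw [ContinuousAt, Metric.tendsto_nhds]
    intro ε hε
    obtain ⟨K, hK⟩ := exists_pow_lt_of_lt_one (half_pos hε) (by norm_num : (2:ℝ)⁻¹ < 1)
    have hev : ∀ᶠ y in 𝓝 x, ∀ k ∈ Finset.range K, dist (ψ k y) (ψ k x) < ε / 2 := by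
      rw [eventually_all_finset]
      intro k _
      exact (Metric.tendsto_nhds.mp ((ψ k).continuous.tendsto x)) (ε / 2) (half_pos hε)
    filter_upwards [hev] with y hy
    have : dist (Φ y) (Φ x) ≤ ε / 2 := by
      rw [BoundedContinuousFunction.dist_le (le_of_lt (half_pos hε))]
      intro k
      rcases lt_or_ge k K with hk | hk
      · rw [hcoord]
        calc (2:ℝ)⁻¹ ^ k * dist (ψ k y) (ψ k x) ≤ 1 * dist (ψ k y) (ψ k x) :=
              mul_le_mul_of_nonneg_right (h2k1 k) dist_nonneg
          _ ≤ ε / 2 := by rw [one_mul]; exact le_of_lt (hy k (Finset.mem_range.2 hk))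
      · rw [hcoord]
        calc (2:ℝ)⁻¹ ^ k * dist (ψ k y) (ψ k x) ≤ (2:ℝ)⁻¹ ^ k * 1 :=
              mul_le_mul_of_nonneg_left (hψd1 k y x) (le_of_lt (h2k k))
          _ = (2:ℝ)⁻¹ ^ k := mul_one _
          _ ≤ (2:ℝ)⁻¹ ^ K := pow_le_pow_of_le_one (by norm_num) (by norm_num) hk
          _ ≤ ε / 2 := le_of_lt hK
    linarith [this, half_lt_self hε]
  -- injectivity of Φ
  have hΦinj : Function.Injective Φ := by
    intro x y hxy
    by_contra hne
    haveI : T2Space X := by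
      letI : MetricSpace X := TopologicalSpace.metrizableSpaceMetric X
      infer_instance
    obtain ⟨k, hk1, hksupp⟩ := hbump x {y}ᶜ isOpen_compl_singleton
      (by simp [hne])
    have hky : ψ k y = 0 := by
      apply image_eq_zero_of_notMem_tsupport
      intro hmem'
      exact (hksupp hmem') rfl
    have := congrArg (fun F => F k) hxy
    simp only [hΦapp, hk1, hky, mul_one, mul_zero] at this
    exact absurd this (by positivity)
  -- Φ is an embedding
  have hΦemb : Topology.IsEmbedding Φ := by
    refine ⟨isInducing_iff_nhds.2 fun x => le_antisymm ?_ ?_, hΦinj⟩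
    · exact (hΦcont.continuousAt (x := x)).le_comap
    · intro s hs
      rcases mem_nhds_iff.mp hs with ⟨O, hOs, hO, hxO⟩
      obtain ⟨k, hk1, hksupp⟩ := hbump x O hO hxO
      refine mem_comap.2 ⟨Metric.ball (Φ x) ((2:ℝ)⁻¹ ^ k / 2),
        Metric.ball_mem_nhds _ (by positivity), ?_⟩
      intro y hy
      simp only [Set.mem_preimage, Metric.mem_ball] at hy
      have hcd : dist (Φ y k) (Φ x k) ≤ dist (Φ y) (Φ x) :=
        BoundedContinuousFunction.dist_coe_le_dist k
      rw [hcoord] at hcd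
      have hdk : (2:ℝ)⁻¹ ^ k * dist (ψ k y) (ψ k x) < (2:ℝ)⁻¹ ^ k / 2 :=
        lt_of_le_of_lt hcd hy
      have hlt : dist (ψ k y) (ψ k x) < 1 / 2 :=
        (mul_lt_mul_iff_right₀ (h2k k)).mp (by
          calc (2:ℝ)⁻¹ ^ k * dist (ψ k y) (ψ k x) < (2:ℝ)⁻¹ ^ k / 2 := hdk
            _ = (2:ℝ)⁻¹ ^ k * (1 / 2) := by ring)
      have hy0 : ψ k y ≠ 0 := by
        intro h0
        rw [Real.dist_eq, h0, hk1] at hlt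
        norm_num at hlt
      exact hOs (hksupp (subset_tsupport (ψ k) hy0))
  -- the metric space structure pulled back along Φ
  set mE : MetricSpace X := hΦemb.comapMetricSpace Φ with hmE
  have heqE : mE.toUniformSpace.toTopologicalSpace = ‹TopologicalSpace X› := rfl
  obtain ⟨c, hc, hexp⟩ := hmie mE heqE
  have hdistE : ∀ u v : X, @dist X mE.toDist u v = dist (Φ u) (Φ v) := fun _ _ => rfl
  -- now use the given metric m
  letI mX : MetricSpace X := m.replaceTopology heq.symm
  have hdistX : ∀ a b : X, @dist X m.toDist a b = dist a b := fun _ _ => rfl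
  -- uniform continuity of Φ ∘ f^j with respect to the metric m, for each j
  have huc : ∀ j : ℕ, ∃ δ > 0, ∀ a b : X, dist a b ≤ δ →
      dist (Φ ((f.toEquiv ^ (j:ℤ)) a)) (Φ ((f.toEquiv ^ (j:ℤ)) b)) ≤ c := by
    intro j
    obtain ⟨g, hg⟩ := exists_homeomorph_zpow f (j : ℤ)
    simp only [← hg]
    obtain ⟨K, hK⟩ := exists_pow_lt_of_lt_one hc (by norm_num : (2:ℝ)⁻¹ < 1)
    have hone : ∀ k < K, ∃ δ > 0, ∀ a b : X, dist a b ≤ δ →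
        dist (ψ k (g a)) (ψ k (g b)) ≤ c := by
      intro k _
      have hucg : UniformContinuous (⇑(ψ k) ∘ ⇑g) :=
        HasCompactSupport.uniformContinuous_of_continuous
          ((hcs k).comp_homeomorph g) ((ψ k).continuous.comp g.continuous)
      obtain ⟨δ, hδ, hδ'⟩ := Metric.uniformContinuous_iff.mp hucg c hc
      refine ⟨δ / 2, half_pos hδ, fun a b hab => ?_⟩
      exact le_of_lt (hδ' (lt_of_le_of_lt hab (half_lt_self hδ)))
    obtain ⟨δ, hδ, hδK⟩ := exists_pos_forall_of_anti
      (fun k δ δ' _ hle h => fun a b hab => h a b (hab.trans hle)) K hone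
    refine ⟨δ, hδ, fun a b hab => ?_⟩
    rw [BoundedContinuousFunction.dist_le (le_of_lt hc)]
    intro k
    rcases lt_or_ge k K with hk | hk
    · rw [hcoord]
      calc (2:ℝ)⁻¹ ^ k * dist (ψ k (g a)) (ψ k (g b))
          ≤ 1 * dist (ψ k (g a)) (ψ k (g b)) :=
            mul_le_mul_of_nonneg_right (h2k1 k) dist_nonneg
        _ ≤ c := by rw [one_mul]; exact hδK k hk a b hab
    · rw [hcoord]
      calc (2:ℝ)⁻¹ ^ k * dist (ψ k (g a)) (ψ k (g b)) ≤ (2:ℝ)⁻¹ ^ k * 1 :=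
            mul_le_mul_of_nonneg_left (hψd1 k _ _) (le_of_lt (h2k k))
        _ = (2:ℝ)⁻¹ ^ k := mul_one _
        _ ≤ (2:ℝ)⁻¹ ^ K := pow_le_pow_of_le_one (by norm_num) (by norm_num) hk
        _ ≤ c := le_of_lt hK
  set N : ℕ := n.natAbs with hN
  have hNpos : 0 < N := Int.natAbs_pos.mpr hn
  obtain ⟨δ, hδ, hδN⟩ := exists_pos_forall_of_anti
    (R := fun j δ => ∀ a b : X, dist a b ≤ δ →
      dist (Φ ((f.toEquiv ^ (j:ℤ)) a)) (Φ ((f.toEquiv ^ (j:ℤ)) b)) ≤ c)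
    (fun k δ δ' _ hle h => fun a b hab => h a b (hab.trans hle)) N (fun j _ => huc j)
  refine ⟨δ, hδ, fun x y hxy => ?_⟩
  obtain ⟨k, hk⟩ := hexp x y hxy
  by_contra hcon
  push_neg at hcon
  -- decompose k = j + n * m0
  set j : ℤ := k % n with hj
  set m0 : ℤ := k / n with hm0
  have hj0 : 0 ≤ j := Int.emod_nonneg k hn
  have hjN : j < (N : ℤ) := by
    rcases lt_or_gt_of_ne hn with hneg | hpos
    · have : k % n = k % (-n) := (Int.emod_neg k (-n)).symm ▸ by rw [neg_neg]
      rw [hj, this]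
      have := Int.emod_lt_of_pos k (by linarith : (0:ℤ) < -n)
      have hnn : (N : ℤ) = -n := by
        rw [hN]; omega
      omega
    · have := Int.emod_lt_of_pos k hpos
      have hnn : (N : ℤ) = n := by rw [hN]; omega
      omega
  have hksplit : j + n * m0 = k := by
    have h := Int.mul_ediv_add_emod k n
    rw [← hm0, ← hj] at h
    omega
  have happ : ∀ z : X, (f.toEquiv ^ k) z = (f.toEquiv ^ j) ((f.toEquiv ^ (n * m0)) z) := by
    intro z
    rw [← Equiv.Perm.mul_apply, ← zpow_add, hksplit]
  -- the contradiction
  have hjnat : ((j.toNat : ℤ)) = j := Int.toNat_of_nonneg hj0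
  have hjltN : j.toNat < N := by omega
  have hsmall : @dist X mE.toDist ((f.toEquiv ^ k) x) ((f.toEquiv ^ k) y) ≤ c := by
    rw [hdistE, happ x, happ y]
    have := hδN j.toNat hjltN ((f.toEquiv ^ (n * m0)) x) ((f.toEquiv ^ (n * m0)) y) ?_
    · rw [hjnat] at this
      exact this
    · have hc' := hcon m0
      rw [hdistX] at hc'
      exact hc'
  exact absurd hk (not_lt.mpr hsmall)
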